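/- Let Q be a medial quandle. Then the following are equivalent: (1) Q is m-reductive for some m; (2) at least one orbit of Q, as a subquandle, is m-reductive for some m; (3) every orbit of Q, as a subquandle, is m-reductive for some m. Moreover: (a) for every m ≥ 1, Q is m-reductive if and only if every orbit of Q is (m−1)-reductive; and (b) if some orbit of Q is m-reductive, then Q is (m+3)-reductive. -/

import Mathlib

/-- The set of left translations of a binary algebra `(Q, op)`, viewed as permutations:
permutations `f` such that `f x = op a x` for some `a`. -/
def translations {Q : Type*} (op : Q → Q → Q) : Set (Equiv.Perm Q) :=
  { f | ∃ a : Q, ∀ x : Q, f x = op a x }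

/-- The (left) multiplication group `LMlt(Q)`: the subgroup of the symmetric group
generated by the left translations. -/
def LMlt {Q : Type*} (op : Q → Q → Q) : Subgroup (Equiv.Perm Q) :=
  Subgroup.closure (translations op)

/-- The displacement group `Dis(Q)`: the subgroup generated by all `L_a * L_b⁻¹`. -/
def Dis {Q : Type*} (op : Q → Q → Q) : Subgroup (Equiv.Perm Q) :=
  Subgroup.closure { f | ∃ g ∈ translations op, ∃ h ∈ translations op, f = g * h⁻¹ }

/-- `(Q, op)` is a quandle: idempotent, left distributive, left quasigroup. -/
def IsQuandle {Q : Type*} (op : Q → Q → Q) : Prop :=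
  (∀ x, op x x = x) ∧
  (∀ x y z, op x (op y z) = op (op x y) (op x z)) ∧
  (∀ x y, ∃! u, op x u = y)

/-- `(Q, op)` is medial. -/
def IsMedial {Q : Type*} (op : Q → Q → Q) : Prop :=
  ∀ x y u v, op (op x y) (op u v) = op (op x u) (op y v)

/-- The orbit of `e` under the multiplication group. -/
def qOrbit {Q : Type*} (op : Q → Q → Q) (e : Q) : Set Q :=
  { y | ∃ f ∈ LMlt op, f e = y }

/-- The orbit of `e` under the displacement group. -/
def disOrbit {Q : Type*} (op : Q → Q → Q) (e : Q) : Set Q :=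
  { y | ∃ f ∈ Dis op, f e = y }


namespace MedialRed

variable {Q : Type*}

/-- Left translation as a permutation. -/
noncomputable def Lp (op : Q → Q → Q) (hQ : IsQuandle op) (a : Q) : Equiv.Perm Q :=
  Equiv.ofBijective (op a) (by
    constructor
    · intro u v huv
      obtain ⟨w, -, hw⟩ := hQ.2.2 a (op a v)
      rw [hw u huv, hw v rfl]
    · intro y
      obtain ⟨u, hu, -⟩ := hQ.2.2 a y
      exact ⟨u, hu⟩)

@[simp] lemma Lp_apply (op : Q → Q → Q) (hQ : IsQuandle op) (a x : Q) :
    Lp op hQ a x = op a x := rfl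

lemma Lp_mem_translations (op : Q → Q → Q) (hQ : IsQuandle op) (a : Q) :
    Lp op hQ a ∈ translations op := ⟨a, fun _ => rfl⟩

lemma translations_eq (op : Q → Q → Q) (hQ : IsQuandle op) {f : Equiv.Perm Q}
    (hf : f ∈ translations op) : ∃ a, f = Lp op hQ a := by
  obtain ⟨a, ha⟩ := hf
  exact ⟨a, Equiv.ext fun x => ha x⟩

@[simp] lemma Lp_self (op : Q → Q → Q) (hQ : IsQuandle op) (a : Q) :
    Lp op hQ a a = a := hQ.1 a

@[simp] lemma Lp_inv_self (op : Q → Q → Q) (hQ : IsQuandle op) (a : Q) :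
    (Lp op hQ a)⁻¹ a = a := by
  rw [Equiv.Perm.inv_def, Equiv.symm_apply_eq]
  exact (Lp_self op hQ a).symm

lemma Lp_op (op : Q → Q → Q) (hQ : IsQuandle op) (a b : Q) :
    Lp op hQ (op a b) = Lp op hQ a * Lp op hQ b * (Lp op hQ a)⁻¹ := by
  have h : Lp op hQ (op a b) * Lp op hQ a = Lp op hQ a * Lp op hQ b := by
    apply Equiv.ext; intro x
    simp only [Equiv.Perm.mul_apply, Lp_apply]
    exact (hQ.2.1 a b x).symm
  calc Lp op hQ (op a b) = Lp op hQ (op a b) * Lp op hQ a * (Lp op hQ a)⁻¹ := by group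
  _ = Lp op hQ a * Lp op hQ b * (Lp op hQ a)⁻¹ := by rw [h]

lemma Lp_inv_conj (op : Q → Q → Q) (hQ : IsQuandle op) (a : Q) (u : Q) :
    Lp op hQ ((Lp op hQ a)⁻¹ u) = (Lp op hQ a)⁻¹ * Lp op hQ u * Lp op hQ a := by
  have h := Lp_op op hQ a ((Lp op hQ a)⁻¹ u)
  have h2 : op a ((Lp op hQ a)⁻¹ u) = u := by
    rw [← Lp_apply op hQ]; exact Equiv.apply_symm_apply _ _
  rw [h2] at h
  rw [h]; group

/-- Conjugation by an element of `LMlt` sends `L_x` to `L_{f x}`. -/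
lemma Lp_conj_lmlt (op : Q → Q → Q) (hQ : IsQuandle op) {f : Equiv.Perm Q}
    (hf : f ∈ LMlt op) (x : Q) :
    Lp op hQ (f x) = f * Lp op hQ x * f⁻¹ := by
  have key : ∀ g ∈ LMlt op, (∀ x, Lp op hQ (g x) = g * Lp op hQ x * g⁻¹) ∧
      (∀ x, Lp op hQ (g⁻¹ x) = g⁻¹ * Lp op hQ x * g) := by
    intro g hg
    induction hg using Subgroup.closure_induction with
    | mem f hf =>
      obtain ⟨a, rfl⟩ := translations_eq op hQ hf
      exact ⟨fun x => Lp_op op hQ a x, fun x => Lp_inv_conj op hQ a x⟩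
    | one => constructor <;> intro x <;> simp
    | mul f g _ _ hf hg =>
      constructor
      · intro x
        have h1 : (f * g) x = f (g x) := rfl
        rw [h1, hf.1, hg.1]; group
      · intro x
        have h1 : (f * g)⁻¹ x = g⁻¹ (f⁻¹ x) := by rw [mul_inv_rev]; rfl
        rw [h1, hg.2, hf.2]; group
    | inv f _ hf =>
      refine ⟨hf.2, fun x => ?_⟩
      have h1 : (f⁻¹)⁻¹ = f := by group
      rw [h1, hf.1]
  exact (key f hf).1 x

lemma med_perm (op : Q → Q → Q) (hQ : IsQuandle op) (hM : IsMedial op) (x y u : Q) :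
    Lp op hQ y * (Lp op hQ x)⁻¹ * Lp op hQ u
      = Lp op hQ u * (Lp op hQ x)⁻¹ * Lp op hQ y := by
  have cancel : Lp op hQ x * (Lp op hQ y * (Lp op hQ x)⁻¹ * Lp op hQ u)
      = Lp op hQ x * (Lp op hQ u * (Lp op hQ x)⁻¹ * Lp op hQ y) := by
    apply Equiv.ext; intro v
    have h := hM x y u v
    have l1 : op (op x y) (op u v) =
        (Lp op hQ x * Lp op hQ y * (Lp op hQ x)⁻¹) (Lp op hQ u v) := by
      rw [← Lp_op op hQ]; rfl
    have l2 : op (op x u) (op y v) =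
        (Lp op hQ x * Lp op hQ u * (Lp op hQ x)⁻¹) (Lp op hQ y v) := by
      rw [← Lp_op op hQ]; rfl
    rw [l1, l2] at h
    simpa [Equiv.Perm.mul_apply] using h
  exact mul_left_cancel cancel

lemma gen_mem_dis (op : Q → Q → Q) (hQ : IsQuandle op) (a b : Q) :
    Lp op hQ a * (Lp op hQ b)⁻¹ ∈ Dis op :=
  Subgroup.subset_closure
    ⟨Lp op hQ a, Lp_mem_translations op hQ a, Lp op hQ b, Lp_mem_translations op hQ b, rfl⟩

lemma dis_le_lmlt (op : Q → Q → Q) : Dis op ≤ LMlt op := by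
  rw [Dis, Subgroup.closure_le]
  rintro f ⟨g, hg, h, hh, rfl⟩
  exact mul_mem (Subgroup.subset_closure hg) (inv_mem (Subgroup.subset_closure hh))

/-- Generators with common base commute. -/
lemma gen_comm (op : Q → Q → Q) (hQ : IsQuandle op) (hM : IsMedial op) (e a b : Q) :
    (Lp op hQ a * (Lp op hQ e)⁻¹) * (Lp op hQ b * (Lp op hQ e)⁻¹)
      = (Lp op hQ b * (Lp op hQ e)⁻¹) * (Lp op hQ a * (Lp op hQ e)⁻¹) := by
  have h := med_perm op hQ hM e a b
  calc (Lp op hQ a * (Lp op hQ e)⁻¹) * (Lp op hQ b * (Lp op hQ e)⁻¹)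
      = (Lp op hQ a * (Lp op hQ e)⁻¹ * Lp op hQ b) * (Lp op hQ e)⁻¹ := by group
    _ = (Lp op hQ b * (Lp op hQ e)⁻¹ * Lp op hQ a) * (Lp op hQ e)⁻¹ := by rw [h]
    _ = (Lp op hQ b * (Lp op hQ e)⁻¹) * (Lp op hQ a * (Lp op hQ e)⁻¹) := by group

/-- `Dis` is generated by the translations based at any fixed point. -/
lemma dis_eq_closure_base (op : Q → Q → Q) (hQ : IsQuandle op) (e : Q) :
    Dis op = Subgroup.closure (Set.range fun a => Lp op hQ a * (Lp op hQ e)⁻¹) := by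
  apply le_antisymm
  · rw [Dis, Subgroup.closure_le]
    rintro f ⟨g, hg, h, hh, rfl⟩
    obtain ⟨a, rfl⟩ := translations_eq op hQ hg
    obtain ⟨b, rfl⟩ := translations_eq op hQ hh
    have h1 : Lp op hQ a * (Lp op hQ b)⁻¹
        = (Lp op hQ a * (Lp op hQ e)⁻¹) * (Lp op hQ b * (Lp op hQ e)⁻¹)⁻¹ := by group
    rw [h1]
    exact mul_mem (Subgroup.subset_closure ⟨a, rfl⟩)
      (inv_mem (Subgroup.subset_closure ⟨b, rfl⟩))
  · rw [Subgroup.closure_le]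
    rintro f ⟨a, rfl⟩
    exact gen_mem_dis op hQ a e

/-- `Dis` is abelian. -/
lemma dis_comm [Nonempty Q] (op : Q → Q → Q) (hQ : IsQuandle op) (hM : IsMedial op)
    {d₁ d₂ : Equiv.Perm Q} (h₁ : d₁ ∈ Dis op) (h₂ : d₂ ∈ Dis op) :
    d₁ * d₂ = d₂ * d₁ := by
  obtain ⟨e⟩ := ‹Nonempty Q›
  rw [dis_eq_closure_base op hQ e] at h₁ h₂
  have hgen : ∀ s ∈ (Set.range fun a => Lp op hQ a * (Lp op hQ e)⁻¹),
      ∀ g ∈ Subgroup.closure (Set.range fun a => Lp op hQ a * (Lp op hQ e)⁻¹),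
      s * g = g * s := by
    intro s hs g hg
    induction hg using Subgroup.closure_induction with
    | mem t ht =>
      obtain ⟨a, rfl⟩ := hs
      obtain ⟨b, rfl⟩ := ht
      exact gen_comm op hQ hM e a b
    | one => simp
    | mul x y hx hy ihx ihy => rw [← mul_assoc, ihx, mul_assoc, ihy, ← mul_assoc]
    | inv x hx ih =>
      calc s * x⁻¹ = x⁻¹ * (x * s) * x⁻¹ := by group
        _ = x⁻¹ * (s * x) * x⁻¹ := by rw [← ih]
        _ = x⁻¹ * s := by group
  induction h₁ using Subgroup.closure_induction with
  | mem s hs => exact hgen s hs d₂ h₂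
  | one => simp
  | mul x y hx hy ihx ihy => rw [mul_assoc, ihy, ← mul_assoc, ihx, mul_assoc]
  | inv x hx ih =>
    calc x⁻¹ * d₂ = x⁻¹ * (d₂ * x) * x⁻¹ := by group
      _ = x⁻¹ * (x * d₂) * x⁻¹ := by rw [← ih]
      _ = d₂ * x⁻¹ := by group

/-- Conjugation by a translation preserves `Dis` (both directions). -/
lemma conj_L_mem (op : Q → Q → Q) (hQ : IsQuandle op) {d : Equiv.Perm Q}
    (hd : d ∈ Dis op) (a : Q) :
    Lp op hQ a * d * (Lp op hQ a)⁻¹ ∈ Dis op ∧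
      (Lp op hQ a)⁻¹ * d * Lp op hQ a ∈ Dis op := by
  induction hd using Subgroup.closure_induction with
  | mem f hf =>
    obtain ⟨g, hg, h, hh, rfl⟩ := hf
    obtain ⟨u, rfl⟩ := translations_eq op hQ hg
    obtain ⟨v, rfl⟩ := translations_eq op hQ hh
    constructor
    · have h1 : Lp op hQ a * (Lp op hQ u * (Lp op hQ v)⁻¹) * (Lp op hQ a)⁻¹
          = (Lp op hQ a * Lp op hQ u * (Lp op hQ a)⁻¹) *
            (Lp op hQ a * Lp op hQ v * (Lp op hQ a)⁻¹)⁻¹ := by group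
      rw [h1, ← Lp_op op hQ, ← Lp_op op hQ]
      exact gen_mem_dis op hQ _ _
    · have h1 : (Lp op hQ a)⁻¹ * (Lp op hQ u * (Lp op hQ v)⁻¹) * Lp op hQ a
          = ((Lp op hQ a)⁻¹ * Lp op hQ u * Lp op hQ a) *
            ((Lp op hQ a)⁻¹ * Lp op hQ v * Lp op hQ a)⁻¹ := by group
      rw [h1, ← Lp_inv_conj op hQ, ← Lp_inv_conj op hQ]
      exact gen_mem_dis op hQ _ _
  | one => constructor <;> simpa using one_mem _
  | mul x y hx hy ihx ihy =>
    constructor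
    · have h1 : Lp op hQ a * (x * y) * (Lp op hQ a)⁻¹
          = (Lp op hQ a * x * (Lp op hQ a)⁻¹) * (Lp op hQ a * y * (Lp op hQ a)⁻¹) := by
        group
      rw [h1]; exact mul_mem ihx.1 ihy.1
    · have h1 : (Lp op hQ a)⁻¹ * (x * y) * Lp op hQ a
          = ((Lp op hQ a)⁻¹ * x * Lp op hQ a) * ((Lp op hQ a)⁻¹ * y * Lp op hQ a) := by
        group
      rw [h1]; exact mul_mem ihx.2 ihy.2
  | inv x hx ih =>
    constructor
    · have h1 : Lp op hQ a * x⁻¹ * (Lp op hQ a)⁻¹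
          = (Lp op hQ a * x * (Lp op hQ a)⁻¹)⁻¹ := by group
      rw [h1]; exact inv_mem ih.1
    · have h1 : (Lp op hQ a)⁻¹ * x⁻¹ * Lp op hQ a
          = ((Lp op hQ a)⁻¹ * x * Lp op hQ a)⁻¹ := by group
      rw [h1]; exact inv_mem ih.2

/-- Conjugation of a displacement by a translation does not depend on the base point. -/
lemma conj_base_indep [Nonempty Q] (op : Q → Q → Q) (hQ : IsQuandle op)
    (hM : IsMedial op) {d : Equiv.Perm Q} (hd : d ∈ Dis op) (a b : Q) :
    Lp op hQ a * d * (Lp op hQ a)⁻¹ = Lp op hQ b * d * (Lp op hQ b)⁻¹ := by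
  have hcD : Lp op hQ a * (Lp op hQ b)⁻¹ ∈ Dis op := gen_mem_dis op hQ a b
  have hd' : Lp op hQ b * d * (Lp op hQ b)⁻¹ ∈ Dis op := (conj_L_mem op hQ hd b).1
  have hcomm := dis_comm op hQ hM hcD hd'
  calc Lp op hQ a * d * (Lp op hQ a)⁻¹
      = (Lp op hQ a * (Lp op hQ b)⁻¹) * (Lp op hQ b * d * (Lp op hQ b)⁻¹) *
        (Lp op hQ a * (Lp op hQ b)⁻¹)⁻¹ := by group
    _ = (Lp op hQ b * d * (Lp op hQ b)⁻¹) * (Lp op hQ a * (Lp op hQ b)⁻¹) *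
        (Lp op hQ a * (Lp op hQ b)⁻¹)⁻¹ := by rw [hcomm]
    _ = Lp op hQ b * d * (Lp op hQ b)⁻¹ := by group

section Psi
variable [Nonempty Q]

/-- The map `1 - φ` on the displacement group, defined with an arbitrary base point. -/
noncomputable def psi (op : Q → Q → Q) (hQ : IsQuandle op) (d : Equiv.Perm Q) :
    Equiv.Perm Q :=
  d * Lp op hQ (Classical.arbitrary Q) * d⁻¹ * (Lp op hQ (Classical.arbitrary Q))⁻¹

lemma psi_base (op : Q → Q → Q) (hQ : IsQuandle op) (hM : IsMedial op)
    {d : Equiv.Perm Q} (hd : d ∈ Dis op) (y : Q) :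
    psi op hQ d = d * Lp op hQ y * d⁻¹ * (Lp op hQ y)⁻¹ := by
  have h := conj_base_indep op hQ hM (inv_mem hd) (Classical.arbitrary Q) y
  have h1 : psi op hQ d = d * (Lp op hQ (Classical.arbitrary Q) * d⁻¹ *
      (Lp op hQ (Classical.arbitrary Q))⁻¹) := by rw [psi]; group
  rw [h1, h]; group

lemma psi_mem (op : Q → Q → Q) (hQ : IsQuandle op) {d : Equiv.Perm Q}
    (hd : d ∈ Dis op) : psi op hQ d ∈ Dis op := by
  have h1 : psi op hQ d = d * (Lp op hQ (Classical.arbitrary Q) * d⁻¹ *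
      (Lp op hQ (Classical.arbitrary Q))⁻¹) := by rw [psi]; group
  rw [h1]
  exact mul_mem hd (conj_L_mem op hQ (inv_mem hd) _).1

lemma psi_apply (op : Q → Q → Q) (hQ : IsQuandle op) (hM : IsMedial op)
    {d : Equiv.Perm Q} (hd : d ∈ Dis op) (y : Q) :
    psi op hQ d y = op (d y) y := by
  have h1 : op (d y) y = Lp op hQ (d y) y := rfl
  rw [h1, Lp_conj_lmlt op hQ (dis_le_lmlt op hd) y, psi_base op hQ hM hd y]
  simp only [Equiv.Perm.mul_apply, Lp_inv_self]

lemma psi_one (op : Q → Q → Q) (hQ : IsQuandle op) :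
    psi op hQ (1 : Equiv.Perm Q) = 1 := by rw [psi]; group

lemma psi_mul (op : Q → Q → Q) (hQ : IsQuandle op) (hM : IsMedial op)
    {d₁ d₂ : Equiv.Perm Q} (h₁ : d₁ ∈ Dis op) (h₂ : d₂ ∈ Dis op) :
    psi op hQ (d₁ * d₂) = psi op hQ d₁ * psi op hQ d₂ := by
  set L := Lp op hQ (Classical.arbitrary Q) with hL
  set c₁ := L * d₁⁻¹ * L⁻¹ with hc₁
  set c₂ := L * d₂⁻¹ * L⁻¹ with hc₂
  have hc₁D : c₁ ∈ Dis op := (conj_L_mem op hQ (inv_mem h₁) _).1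
  have hc₂D : c₂ ∈ Dis op := (conj_L_mem op hQ (inv_mem h₂) _).1
  have e₁ : c₁ * d₂ = d₂ * c₁ := dis_comm op hQ hM hc₁D h₂
  have e₂ : c₁ * c₂ = c₂ * c₁ := dis_comm op hQ hM hc₁D hc₂D
  have lhs : psi op hQ (d₁ * d₂) = d₁ * d₂ * (c₂ * c₁) := by
    rw [psi, ← hL, hc₁, hc₂]; group
  have rhs : psi op hQ d₁ * psi op hQ d₂ = d₁ * (c₁ * d₂) * c₂ := by
    rw [psi, psi, ← hL, hc₁, hc₂]; group
  rw [lhs, rhs, e₁, ← e₂]; group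

lemma psiIter_mem (op : Q → Q → Q) (hQ : IsQuandle op) {d : Equiv.Perm Q}
    (hd : d ∈ Dis op) (k : ℕ) : (psi op hQ)^[k] d ∈ Dis op := by
  induction k generalizing d with
  | zero => exact hd
  | succ n ih =>
    rw [Function.iterate_succ_apply]
    exact ih (psi_mem op hQ hd)

lemma psiIter_one (op : Q → Q → Q) (hQ : IsQuandle op) (k : ℕ) :
    (psi op hQ)^[k] (1 : Equiv.Perm Q) = 1 := by
  induction k with
  | zero => rfl
  | succ n ih => rw [Function.iterate_succ_apply, psi_one]; exact ih

lemma psiIter_mul (op : Q → Q → Q) (hQ : IsQuandle op) (hM : IsMedial op)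
    {d₁ d₂ : Equiv.Perm Q} (h₁ : d₁ ∈ Dis op) (h₂ : d₂ ∈ Dis op) (k : ℕ) :
    (psi op hQ)^[k] (d₁ * d₂) = (psi op hQ)^[k] d₁ * (psi op hQ)^[k] d₂ := by
  induction k generalizing d₁ d₂ with
  | zero => rfl
  | succ n ih =>
    rw [Function.iterate_succ_apply, Function.iterate_succ_apply,
      Function.iterate_succ_apply, psi_mul op hQ hM h₁ h₂]
    exact ih (psi_mem op hQ h₁) (psi_mem op hQ h₂)

lemma psiIter_inv (op : Q → Q → Q) (hQ : IsQuandle op) (hM : IsMedial op)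
    {d : Equiv.Perm Q} (hd : d ∈ Dis op) (k : ℕ) :
    (psi op hQ)^[k] d⁻¹ = ((psi op hQ)^[k] d)⁻¹ := by
  have h := psiIter_mul op hQ hM hd (inv_mem hd) k
  rw [mul_inv_cancel, psiIter_one] at h
  exact eq_inv_of_mul_eq_one_right h.symm

/-- Key iteration formula: `σ_y^[k] (d y) = (ψ^[k] d) y` for `d ∈ Dis`. -/
lemma iterate_eq_psi (op : Q → Q → Q) (hQ : IsQuandle op) (hM : IsMedial op)
    {d : Equiv.Perm Q} (hd : d ∈ Dis op) (y : Q) (k : ℕ) :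
    (fun z => op z y)^[k] (d y) = ((psi op hQ)^[k] d) y := by
  induction k generalizing d with
  | zero => rfl
  | succ n ih =>
    rw [Function.iterate_succ_apply, Function.iterate_succ_apply]
    rw [show op (d y) y = psi op hQ d y from (psi_apply op hQ hM hd y).symm]
    exact ih (psi_mem op hQ hd)

lemma sigma_eq (op : Q → Q → Q) (hQ : IsQuandle op) (x y : Q) :
    op x y = (Lp op hQ x * (Lp op hQ y)⁻¹) y := by
  simp [Equiv.Perm.mul_apply]

/-- `Q` is `(k+1)`-reductive iff `ψ^[k] d` fixes every point, for every `d ∈ Dis`. -/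
lemma reductive_iff_psi (op : Q → Q → Q) (hQ : IsQuandle op) (hM : IsMedial op) (k : ℕ) :
    (∀ x y : Q, (fun z => op z y)^[k + 1] x = y) ↔
      (∀ y : Q, ∀ d ∈ Dis op, (psi op hQ)^[k] d y = y) := by
  constructor
  · intro h y d hd
    have base : ∀ a : Q, (psi op hQ)^[k] (Lp op hQ a * (Lp op hQ y)⁻¹) y = y := by
      intro a
      have h1 := iterate_eq_psi op hQ hM (gen_mem_dis op hQ a y) y k
      have h2 : (Lp op hQ a * (Lp op hQ y)⁻¹) y = op a y := (sigma_eq op hQ a y).symm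
      rw [h2] at h1
      have h3 : (fun z => op z y)^[k + 1] a = (fun z => op z y)^[k] (op a y) :=
        Function.iterate_succ_apply _ _ _
      rw [← h1, ← h3]
      exact h a y
    rw [dis_eq_closure_base op hQ y] at hd
    induction hd using Subgroup.closure_induction with
    | mem s hs =>
      obtain ⟨a, rfl⟩ := hs
      exact base a
    | one => rw [psiIter_one]; rfl
    | mul f g hf hg ihf ihg =>
      have hf' : f ∈ Dis op := by rw [dis_eq_closure_base op hQ y]; exact hf
      have hg' : g ∈ Dis op := by rw [dis_eq_closure_base op hQ y]; exact hg
      rw [psiIter_mul op hQ hM hf' hg' k, Equiv.Perm.mul_apply, ihg, ihf]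
    | inv f hf ih =>
      have hf' : f ∈ Dis op := by rw [dis_eq_closure_base op hQ y]; exact hf
      rw [psiIter_inv op hQ hM hf' k]
      conv_lhs => rw [← ih]
      exact Equiv.symm_apply_apply _ _
  · intro h x y
    have h3 : (fun z => op z y)^[k + 1] x = (fun z => op z y)^[k] (op x y) :=
      Function.iterate_succ_apply _ _ _
    rw [h3, sigma_eq op hQ x y, iterate_eq_psi op hQ hM (gen_mem_dis op hQ x y) y k]
    exact h y _ (gen_mem_dis op hQ x y)

end Psi

lemma self_mem_orbit (op : Q → Q → Q) (e : Q) : e ∈ qOrbit op e := ⟨1, one_mem _, rfl⟩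

lemma orbit_eq (op : Q → Q → Q) {e y : Q} (hy : y ∈ qOrbit op e) :
    qOrbit op y = qOrbit op e := by
  obtain ⟨g, hg, rfl⟩ := hy
  ext x
  constructor
  · rintro ⟨f, hf, rfl⟩
    exact ⟨f * g, mul_mem hf hg, rfl⟩
  · rintro ⟨f, hf, rfl⟩
    refine ⟨f * g⁻¹, mul_mem hf (inv_mem hg), ?_⟩
    simp [Equiv.Perm.mul_apply]

lemma lmlt_apply_mem_orbit (op : Q → Q → Q) {e y : Q} (hy : y ∈ qOrbit op e)
    {f : Equiv.Perm Q} (hf : f ∈ LMlt op) : f y ∈ qOrbit op e := by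
  obtain ⟨g, hg, rfl⟩ := hy
  exact ⟨f * g, mul_mem hf hg, rfl⟩

/-- Every point of an orbit is reached from any base point by a displacement. -/
lemma orbit_dis (op : Q → Q → Q) (hQ : IsQuandle op) {e x : Q}
    (hx : x ∈ qOrbit op e) : ∃ d ∈ Dis op, d e = x := by
  obtain ⟨f, hf, rfl⟩ := hx
  have key : ∀ g ∈ LMlt op, (∀ p : Q, ∃ d ∈ Dis op, g p = d p) ∧
      (∀ p : Q, ∃ d ∈ Dis op, g⁻¹ p = d p) := by
    intro g hg
    induction hg using Subgroup.closure_induction with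
    | mem f hf =>
      obtain ⟨a, rfl⟩ := translations_eq op hQ hf
      constructor
      · intro p
        refine ⟨Lp op hQ a * (Lp op hQ p)⁻¹, gen_mem_dis op hQ a p, ?_⟩
        simp [Equiv.Perm.mul_apply]
      · intro p
        refine ⟨Lp op hQ ((Lp op hQ a)⁻¹ p) * (Lp op hQ a)⁻¹,
          gen_mem_dis op hQ _ a, ?_⟩
        simp only [Equiv.Perm.mul_apply]
        rw [Lp_self]
    | one => exact ⟨fun p => ⟨1, one_mem _, rfl⟩, fun p => ⟨1, one_mem _, rfl⟩⟩
    | mul f g hf hg ihf ihg =>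
      constructor
      · intro p
        obtain ⟨dg, hdg, hdg2⟩ := ihg.1 p
        obtain ⟨df, hdf, hdf2⟩ := ihf.1 (dg p)
        refine ⟨df * dg, mul_mem hdf hdg, ?_⟩
        have h1 : (f * g) p = f (g p) := rfl
        rw [h1, hdg2, hdf2]; rfl
      · intro p
        obtain ⟨df, hdf, hdf2⟩ := ihf.2 p
        obtain ⟨dg, hdg, hdg2⟩ := ihg.2 (df p)
        refine ⟨dg * df, mul_mem hdg hdf, ?_⟩
        have h1 : (f * g)⁻¹ p = g⁻¹ (f⁻¹ p) := by rw [mul_inv_rev]; rfl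
        rw [h1, hdf2, hdg2]; rfl
    | inv f hf ih =>
      refine ⟨ih.2, fun p => ?_⟩
      rw [inv_inv]
      exact ih.1 p
  obtain ⟨d, hd, hde⟩ := (key f hf).1 e
  exact ⟨d, hd, hde.symm⟩

/-- The orbit of `e` is `n`-reductive iff `ψ^[n] d` fixes the orbit pointwise. -/
lemma orbit_reductive_iff [Nonempty Q] (op : Q → Q → Q) (hQ : IsQuandle op)
    (hM : IsMedial op) (e : Q) (n : ℕ) :
    (∀ x ∈ qOrbit op e, ∀ y ∈ qOrbit op e, (fun z => op z y)^[n] x = y) ↔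
      (∀ y ∈ qOrbit op e, ∀ d ∈ Dis op, (psi op hQ)^[n] d y = y) := by
  constructor
  · intro h y hy d hd
    have hdy : d y ∈ qOrbit op e := lmlt_apply_mem_orbit op hy (dis_le_lmlt op hd)
    rw [← iterate_eq_psi op hQ hM hd y n]
    exact h (d y) hdy y hy
  · intro h x hx y hy
    have hx' : x ∈ qOrbit op y := by rw [orbit_eq op hy]; exact hx
    obtain ⟨d, hd, rfl⟩ := orbit_dis op hQ hx'
    rw [iterate_eq_psi op hQ hM hd y n]
    exact h y hy d hd

/-- Key collapsing fact: a displacement fixing a point has `ψ d = 1`. -/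
lemma psi_fix [Nonempty Q] (op : Q → Q → Q) (hQ : IsQuandle op) (hM : IsMedial op)
    {d : Equiv.Perm Q} (hd : d ∈ Dis op) {e : Q} (he : d e = e) :
    psi op hQ d = 1 := by
  rw [psi_base op hQ hM hd e]
  have h : d * Lp op hQ e * d⁻¹ = Lp op hQ (d e) :=
    (Lp_conj_lmlt op hQ (dis_le_lmlt op hd) e).symm
  calc d * Lp op hQ e * d⁻¹ * (Lp op hQ e)⁻¹
      = Lp op hQ (d e) * (Lp op hQ e)⁻¹ := by rw [← h]
    _ = 1 := by rw [he]; group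

/-- Part (b): if the orbit of `e` is `m`-reductive then `Q` is `(m+3)`-reductive. -/
lemma part_b [Nonempty Q] (op : Q → Q → Q) (hQ : IsQuandle op) (hM : IsMedial op)
    (m : ℕ) (e : Q)
    (h : ∀ x ∈ qOrbit op e, ∀ y ∈ qOrbit op e, (fun z => op z y)^[m] x = y) :
    ∀ x y : Q, (fun z => op z y)^[m + 3] x = y := by
  have horb := (orbit_reductive_iff op hQ hM e m).1 h
  have key : ∀ y : Q, ∀ d ∈ Dis op, (psi op hQ)^[m + 2] d y = y := by
    intro y d hd
    have hc : (psi op hQ)^[m] d ∈ Dis op := psiIter_mem op hQ hd m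
    have hce : ((psi op hQ)^[m] d) e = e := horb e (self_mem_orbit op e) d hd
    have h1 : psi op hQ ((psi op hQ)^[m] d) = 1 := psi_fix op hQ hM hc hce
    have h2 : (psi op hQ)^[m + 2] d = 1 := by
      have e1 : (psi op hQ)^[m + 2] d = (psi op hQ)^[2] ((psi op hQ)^[m] d) := by
        rw [add_comm]
        exact Function.iterate_add_apply _ 2 m d
      have e2 : (psi op hQ)^[2] ((psi op hQ)^[m] d)
          = psi op hQ (psi op hQ ((psi op hQ)^[m] d)) := rfl
      rw [e1, e2, h1, psi_one]
    rw [h2]; rfl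
  exact fun x y => (reductive_iff_psi op hQ hM (m + 2)).2 key x y

end MedialRed

/-- Theorem 6.6: for a medial quandle `Q`, the following are equivalent:
(1) `Q` is reductive; (2) at least one orbit of `Q` is reductive; (3) all orbits of
`Q` are reductive. Moreover, (a) `Q` is `m`-reductive iff all orbits are
`(m-1)`-reductive, and (b) if one orbit is `m`-reductive then `Q` is
`(m+3)`-reductive. -/
theorem reductivity_of_medial_quandles {Q : Type*} [Nonempty Q] (op : Q → Q → Q)
    (hQ : IsQuandle op) (hM : IsMedial op) :
    ((∃ m : ℕ, ∀ x y : Q, (fun z => op z y)^[m] x = y) ↔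
      (∃ e : Q, ∃ m : ℕ, ∀ x ∈ qOrbit op e, ∀ y ∈ qOrbit op e,
        (fun z => op z y)^[m] x = y)) ∧
    ((∃ m : ℕ, ∀ x y : Q, (fun z => op z y)^[m] x = y) ↔
      (∀ e : Q, ∃ m : ℕ, ∀ x ∈ qOrbit op e, ∀ y ∈ qOrbit op e,
        (fun z => op z y)^[m] x = y)) ∧
    (∀ m : ℕ, 1 ≤ m →
      ((∀ x y : Q, (fun z => op z y)^[m] x = y) ↔
        ∀ e : Q, ∀ x ∈ qOrbit op e, ∀ y ∈ qOrbit op e,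
          (fun z => op z y)^[m - 1] x = y)) ∧
    (∀ m : ℕ,
      (∃ e : Q, ∀ x ∈ qOrbit op e, ∀ y ∈ qOrbit op e, (fun z => op z y)^[m] x = y) →
      ∀ x y : Q, (fun z => op z y)^[m + 3] x = y) := by
  have partb : ∀ m : ℕ,
      (∃ e : Q, ∀ x ∈ qOrbit op e, ∀ y ∈ qOrbit op e, (fun z => op z y)^[m] x = y) →
      ∀ x y : Q, (fun z => op z y)^[m + 3] x = y := by
    rintro m ⟨e, he⟩
    exact MedialRed.part_b op hQ hM m e he
  refine ⟨?_, ?_, ?_, partb⟩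
  · constructor
    · rintro ⟨m, h⟩
      exact ⟨Classical.arbitrary Q, m, fun x _ y _ => h x y⟩
    · rintro ⟨e, m, h⟩
      exact ⟨m + 3, partb m ⟨e, h⟩⟩
  · constructor
    · rintro ⟨m, h⟩ e
      exact ⟨m, fun x _ y _ => h x y⟩
    · intro h
      obtain ⟨m, hm⟩ := h (Classical.arbitrary Q)
      exact ⟨m + 3, partb m ⟨Classical.arbitrary Q, hm⟩⟩
  · intro m hm
    obtain ⟨k, rfl⟩ : ∃ k, m = k + 1 := ⟨m - 1, (Nat.succ_pred_eq_of_pos hm).symm⟩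
    have hsub : k + 1 - 1 = k := rfl
    rw [hsub]
    constructor
    · intro h e
      rw [MedialRed.orbit_reductive_iff op hQ hM e k]
      intro y _ d hd
      exact (MedialRed.reductive_iff_psi op hQ hM k).1 h y d hd
    · intro h
      rw [MedialRed.reductive_iff_psi op hQ hM k]
      intro y d hd
      have := (MedialRed.orbit_reductive_iff op hQ hM y k).1 (h y)
      exact this y (MedialRed.self_mem_orbit op y) d hd
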